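/- A k-subspace W ⊂ N ⊗_{F_p} k satisfies φ(W) = W if and only if there exists an F_p-subspace T ⊂ N such that W = T ⊗_{F_p} k (viewed inside N ⊗_{F_p} k). -/

import Mathlib

open Module Submodule Function

/-- On a perfect field the Frobenius is surjective, so images of submodules under
Frobenius-semilinear maps are again submodules. -/
instance frobSurj (k : Type*) [Field k] (p : ℕ) [Fact p.Prime] [CharP k p] [PerfectRing k p] :
    RingHomSurjective (frobenius k p) := ⟨surjective_frobenius k p⟩


open TensorProduct

open Polynomial in
theorem aux_primefield (p : ℕ) [Fact p.Prime] (k : Type*) [Field k] [CharP k p] [Algebra (ZMod p) k]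
    (c : k) (hc : c ^ p = c) : ∃ n : ZMod p, algebraMap (ZMod p) k n = c := by
  classical
  have hp := (Fact.out : p.Prime).one_lt
  set f : k[X] := X ^ p - X with hf
  have hf0 : f ≠ 0 := FiniteField.X_pow_card_sub_X_ne_zero k hp
  have hdeg : f.natDegree = p := FiniteField.X_pow_card_sub_X_natDegree_eq k hp
  have hroot : ∀ n : ZMod p, IsRoot f (algebraMap (ZMod p) k n) := by
    intro n
    simp only [f, IsRoot.def, eval_sub, eval_pow, eval_X, sub_eq_zero, ← map_pow, ZMod.pow_card]
  have hinj : Function.Injective (algebraMap (ZMod p) k) := (algebraMap (ZMod p) k).injective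
  set s : Finset k := Finset.univ.image (algebraMap (ZMod p) k) with hs
  have hscard : s.card = p := by
    rw [hs, Finset.card_image_of_injective _ hinj, Finset.card_univ, ZMod.card]
  have hsub : s.val ≤ f.roots := by
    rw [Multiset.le_iff_count]
    intro a
    by_cases ha : a ∈ s
    · have h1 : Multiset.count a s.val ≤ 1 := Multiset.nodup_iff_count_le_one.mp s.nodup a
      have h2 : 1 ≤ Multiset.count a f.roots := by
        rw [Multiset.one_le_count_iff_mem, mem_roots hf0]
        obtain ⟨n, -, rfl⟩ := Finset.mem_image.mp ha
        exact hroot n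
      omega
    · rw [Multiset.count_eq_zero_of_notMem ha]
      exact Nat.zero_le _
  have hcardroots : f.roots.card ≤ p := hdeg ▸ f.card_roots' 
  have heq : s.val = f.roots := Multiset.eq_of_le_of_card_le hsub (by
    rw [Finset.card_def] at hscard; omega)
  have hcmem : c ∈ f.roots := by
    rw [mem_roots hf0]
    simp [f, IsRoot.def, hc]
  rw [← heq] at hcmem
  obtain ⟨n, -, hn⟩ := Finset.mem_image.mp hcmem
  exact ⟨n, hn⟩

open Polynomial in
theorem aux_AS (p : ℕ) [Fact p.Prime] (k : Type*) [Field k] [IsAlgClosed k] [CharP k p]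
    (c : k) : ∃ x : k, x ^ p - x = c := by
  have hp := (Fact.out : p.Prime).one_lt
  have hdeg : ((X : k[X]) ^ p - X - C c).degree ≠ 0 := by
    have h1 : ((X : k[X]) + C c).degree < ((X : k[X]) ^ p).degree := by
      apply lt_of_le_of_lt (degree_add_le _ _)
      rw [degree_X_pow, max_lt_iff, degree_X]
      exact ⟨by exact_mod_cast hp, lt_of_le_of_lt degree_C_le (by exact_mod_cast Nat.lt_of_lt_of_le Nat.one_pos hp.le)⟩
    have : ((X : k[X]) ^ p - X - C c) = X ^ p - (X + C c) := by ring
    rw [this, degree_sub_eq_left_of_degree_lt h1, degree_X_pow]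
    simp; omega
  obtain ⟨x, hx⟩ := IsAlgClosed.exists_root _ hdeg
  refine ⟨x, ?_⟩
  have := hx
  simp only [IsRoot.def, eval_sub, eval_pow, eval_X, eval_C] at this
  linear_combination this


/-- over an algebraically closed field `k` of characteristic `p`, with
`φ : N ⊗_{F_p} k → N ⊗_{F_p} k` the `p`-semilinear bijection `v ⊗ λ ↦ v ⊗ λ^p`,
a `k`-subspace `W` satisfies `φ(W) = W` iff `W = T ⊗_{F_p} k` for an `F_p`-subspace
`T ⊂ N`. -/
theorem phi_stable_iff_descends_to_Fp
    (p : ℕ) [Fact p.Prime]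
    (k : Type*) [Field k] [IsAlgClosed k] [CharP k p] [Algebra (ZMod p) k]
    (N : Type*) [AddCommGroup N] [Module (ZMod p) N] [FiniteDimensional (ZMod p) N]
    (φ : (k ⊗[ZMod p] N) →ₛₗ[frobenius k p] (k ⊗[ZMod p] N))
    (hφ : ∀ (c : k) (v : N), φ (c ⊗ₜ[ZMod p] v) = (c ^ p) ⊗ₜ[ZMod p] v)
    (W : Submodule k (k ⊗[ZMod p] N)) :
    Submodule.map φ W = W ↔
      ∃ T : Submodule (ZMod p) N,
        W = Submodule.span k ((fun v : N => (1 : k) ⊗ₜ[ZMod p] v) '' (T : Set N)) := by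
  classical
  have hsmul : ∀ (c : k) (x : k ⊗[ZMod p] N), φ (c • x) = c ^ p • φ x := by
    intro c x
    rw [map_smulₛₗ, frobenius_def]
  have hone : ∀ v : N, φ ((1 : k) ⊗ₜ[ZMod p] v) = (1 : k) ⊗ₜ[ZMod p] v := by
    intro v; rw [hφ, one_pow]
  constructor
  · intro h
    -- setup
    set e := Module.Free.chooseBasis (ZMod p) N with he
    set b := Algebra.TensorProduct.basis k e with hb
    have hbfix : ∀ i, φ (b i) = b i := by
      intro i
      rw [hb, Algebra.TensorProduct.basis_apply, hone]
    have hrepr : ∀ (x : k ⊗[ZMod p] N) i, b.repr (φ x) i = (b.repr x i) ^ p := by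
      intro x i
      have hx : φ x = ∑ j, (b.repr x j) ^ p • b j := by
        conv_lhs => rw [← b.sum_repr x]
        rw [map_sum]
        simp only [hsmul, hbfix]
      rw [hx]
      simp [Finsupp.single_apply]
    -- fixed points are of the form 1 ⊗ v
    have hfix : ∀ x : k ⊗[ZMod p] N, φ x = x → ∃ v : N, x = (1 : k) ⊗ₜ[ZMod p] v := by
      intro x hx
      have hcoef : ∀ i, ∃ n : ZMod p, algebraMap (ZMod p) k n = b.repr x i := by
        intro i
        apply aux_primefield p k
        rw [← hrepr x i, hx]
      choose n hn using hcoef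
      refine ⟨∑ i, n i • e i, ?_⟩
      rw [tmul_sum]
      conv_lhs => rw [← b.sum_repr x]
      apply Finset.sum_congr rfl
      intro i _
      rw [← hn i, hb, Algebra.TensorProduct.basis_apply, algebraMap_smul, tmul_smul]
    -- the candidate F_p-structure
    set T : Submodule (ZMod p) N :=
      Submodule.comap ((TensorProduct.mk (ZMod p) k N) 1) (W.restrictScalars (ZMod p)) with hT
    set S : Submodule k (k ⊗[ZMod p] N) :=
      Submodule.span k ((fun v : N => (1 : k) ⊗ₜ[ZMod p] v) '' (T : Set N)) with hS
    have hSW : S ≤ W := by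
      rw [hS, Submodule.span_le]
      rintro _ ⟨v, hv, rfl⟩
      exact hv
    -- Artin-Schreier solvability inside S
    have hAS : ∀ u ∈ S, ∃ z ∈ S, φ z - z = u := by
      intro u hu
      rw [hS, mem_span_set'] at hu
      obtain ⟨m, f, g, hg⟩ := hu
      have hgex : ∀ j : Fin m, ∃ t : N, t ∈ T ∧ (g j : k ⊗[ZMod p] N) = (1 : k) ⊗ₜ[ZMod p] t := by
        intro j
        obtain ⟨t, ht, hteq⟩ := (g j).2
        exact ⟨t, ht, hteq.symm⟩
      choose t ht hteq using hgex
      have hx : ∀ j : Fin m, ∃ x : k, x ^ p - x = f j := fun j => aux_AS p k (f j)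
      choose x hxeq using hx
      refine ⟨∑ j, x j • ((1 : k) ⊗ₜ[ZMod p] t j), ?_, ?_⟩
      · apply Submodule.sum_mem
        intro j _
        apply Submodule.smul_mem
        rw [hS]
        exact Submodule.subset_span ⟨t j, ht j, rfl⟩
      · rw [map_sum, ← Finset.sum_sub_distrib]
        rw [← hg]
        apply Finset.sum_congr rfl
        intro j _
        rw [hsmul, hone, hteq, ← hxeq]
        exact (sub_smul (x j ^ p) (x j) ((1 : k) ⊗ₜ[ZMod p] t j)).symm
    -- W is stable
    have hWst : ∀ w ∈ W, φ w ∈ W := by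
      intro w hw
      rw [← h]
      exact Submodule.mem_map_of_mem hw
    -- main induction
    have key : ∀ (m : ℕ) (w : k ⊗[ZMod p] N), w ∈ W → (b.repr w).support.card ≤ m → w ∈ S := by
      intro m
      induction m using Nat.strong_induction_on with
      | _ m ih =>
        intro w hw hcard
        by_cases hw0 : w = 0
        · rw [hw0]; exact Submodule.zero_mem S
        · have hne : (b.repr w).support.Nonempty := by
            rw [Finsupp.support_nonempty_iff]
            simpa using hw0
          obtain ⟨i, hi⟩ := hne
          have hci : b.repr w i ≠ 0 := Finsupp.mem_support_iff.mp hi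
          set c : k := b.repr w i with hc
          set w' : k ⊗[ZMod p] N := c⁻¹ • w with hw'
          have hw'W : w' ∈ W := Submodule.smul_mem W _ hw
          have hw'i : b.repr w' i = 1 := by
            rw [hw', map_smul]
            simp [hc, inv_mul_cancel₀ hci]
            exact inv_mul_cancel₀ hci
          have hsupp' : (b.repr w').support = (b.repr w).support := by
            rw [hw', map_smul]
            exact Finsupp.support_smul_eq (inv_ne_zero hci)
          set u : k ⊗[ZMod p] N := φ w' - w' with hu
          have huW : u ∈ W := Submodule.sub_mem W (hWst w' hw'W) hw'W
          have hurepr : ∀ j, b.repr u j = (b.repr w' j) ^ p - b.repr w' j := by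
            intro j
            rw [hu, map_sub, Finsupp.sub_apply, hrepr]
          have husupp : (b.repr u).support ⊆ (b.repr w').support.erase i := by
            intro j hj
            rw [Finsupp.mem_support_iff, hurepr] at hj
            rw [Finset.mem_erase, Finsupp.mem_support_iff]
            constructor
            · rintro rfl
              rw [hw'i] at hj
              simp at hj
            · intro hj0
              rw [hj0] at hj
              simp [zero_pow (Fact.out : p.Prime).ne_zero] at hj
          have hcardu : (b.repr u).support.card < m := by
            have h1 := Finset.card_le_card husupp
            have h2 : ((b.repr w').support.erase i).card < (b.repr w').support.card :=
              Finset.card_erase_lt_of_mem (by rw [hsupp']; exact hi)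
            have h3 : (b.repr w').support.card ≤ m := by rw [hsupp']; exact hcard
            omega
          have huS : u ∈ S := ih _ hcardu u huW le_rfl
          obtain ⟨z, hzS, hz⟩ := hAS (-u) (Submodule.neg_mem S huS)
          have hfy : φ (w' + z) = w' + z := by
            have h1 : φ w' = w' + u := by rw [hu]; abel
            rw [map_add, h1]
            have h2 : φ z = z - u := by
              have := hz; rw [sub_eq_iff_eq_add] at this; rw [this]; abel
            rw [h2]; abel
          obtain ⟨v, hv⟩ := hfix _ hfy
          have hvT : v ∈ T := by
            rw [hT]
            have : (1 : k) ⊗ₜ[ZMod p] v ∈ W := by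
              rw [← hv]
              exact Submodule.add_mem W hw'W (hSW hzS)
            exact this
          have hyS : w' + z ∈ S := by
            rw [hv, hS]
            exact Submodule.subset_span ⟨v, hvT, rfl⟩
          have hw'S : w' ∈ S := by
            have := Submodule.sub_mem S hyS hzS
            simpa using this
          have : w = c • w' := by
            rw [hw', smul_smul, mul_inv_cancel₀ hci, one_smul]
          rw [this]
          exact Submodule.smul_mem S _ hw'S
    refine ⟨T, le_antisymm ?_ hSW⟩
    intro w hw
    exact key (b.repr w).support.card w hw le_rfl
  · rintro ⟨T, rfl⟩
    rw [Submodule.map_span]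
    congr 1
    rw [← Set.image_comp]
    apply Set.image_congr
    intro v _
    exact hone v
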